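/- For ε > 0 define F₁(ε) := (1/(2πε)) ∫_ℝ exp( −(1 − ε² (m² − 1)/2)² / (2ε²) − m²/2 ) dm, which is the value at y = 1 of the (continuous) probability density of the random variable ε N + ε² (M² − 1)/2, where N, M are independent standard normal random variables. Then there exists a constant c₀ > 0 such that ε^{3/2} · e^{1/(2ε²)} · F₁(ε) → c₀ as ε ↓ 0; i.e. F₁(ε) = ε^{−3/2} e^{−1/(2ε²)} (c₀ + o(1)). -/

import Mathlib

open MeasureTheory

/-- The density at `y = 1` of `εN + ε²(M²−1)/2` (N, M independent standard normals),
written as a convolution integral. -/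
noncomputable def Fdens1 (ε : ℝ) : ℝ :=
  (1 / (2 * Real.pi * ε)) *
    ∫ m : ℝ, Real.exp (-(1 - ε ^ 2 * (m ^ 2 - 1) / 2) ^ 2 / (2 * ε ^ 2) - m ^ 2 / 2)

lemma aux_bound (ε u : ℝ) (h0 : 0 < ε) (h1 : ε ≤ 1) :
    Real.exp (-(u ^ 2 - ε) ^ 2 / 8) ≤ Real.exp (17/4) * Real.exp (-u ^ 2) := by
  rw [← Real.exp_add]
  apply Real.exp_le_exp.mpr
  nlinarith [sq_nonneg u, sq_nonneg (u^2 - 5), sq_nonneg (u*ε), mul_nonneg (sq_nonneg u) h0.le,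
    mul_le_of_le_one_right (sq_nonneg u) h1]

lemma aux_integrable : Integrable (fun u : ℝ => Real.exp (17/4) * Real.exp (-u ^ 2)) := by
  apply Integrable.const_mul
  simpa using integrable_exp_neg_mul_sq (one_pos)

lemma aux_integrable0 : Integrable (fun u : ℝ => Real.exp (-(u ^ 2 - 0) ^ 2 / 8)) := by
  refine Integrable.mono aux_integrable ?_ ?_
  · exact (Real.continuous_exp.comp (by continuity)).aestronglyMeasurable
  · filter_upwards with u
    rw [Real.norm_eq_abs, Real.norm_eq_abs, abs_of_pos (Real.exp_pos _),
      abs_of_pos (by positivity), ← Real.exp_add]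
    apply Real.exp_le_exp.mpr
    nlinarith [sq_nonneg (u^2 - 4)]

/-- Exact identity for `ε > 0`. -/
lemma key_eq (ε : ℝ) (hε : 0 < ε) :
    ε ^ ((3:ℝ)/2) * Real.exp (1 / (2 * ε ^ 2)) * Fdens1 ε
      = (Real.exp (-(1:ℝ)/2) / (2 * Real.pi)) * ∫ u : ℝ, Real.exp (-(u ^ 2 - ε) ^ 2 / 8) := by
  have hε' : ε ≠ 0 := hε.ne'
  have hs : Real.sqrt ε > 0 := Real.sqrt_pos.mpr hε
  have hstep : ∀ m : ℝ,
      Real.exp (-(1 - ε ^ 2 * (m ^ 2 - 1) / 2) ^ 2 / (2 * ε ^ 2) - m ^ 2 / 2)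
        = Real.exp (-1 / (2 * ε ^ 2) - 1/2) *
            Real.exp (-(((Real.sqrt ε) * m) ^ 2 - ε) ^ 2 / 8) := by
    intro m
    rw [← Real.exp_add]
    congr 1
    have hsq : (Real.sqrt ε) ^ 2 = ε := Real.sq_sqrt hε.le
    rw [mul_pow, hsq]
    field_simp
    ring
  unfold Fdens1
  rw [integral_congr_ae (Filter.Eventually.of_forall hstep), integral_const_mul,
    MeasureTheory.Measure.integral_comp_mul_left (fun u => Real.exp (-(u ^ 2 - ε) ^ 2 / 8)) (Real.sqrt ε)]
  rw [smul_eq_mul, abs_of_pos (inv_pos.mpr hs)]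
  have h32 : ε ^ ((3:ℝ)/2) = ε * Real.sqrt ε := by
    rw [show (3:ℝ)/2 = 1 + 1/2 by norm_num, Real.rpow_add hε, Real.rpow_one,
      ← Real.sqrt_eq_rpow]
  have hAB : Real.exp (1 / (2 * ε ^ 2)) * Real.exp (-1 / (2 * ε ^ 2) - 1/2)
      = Real.exp (-(1:ℝ)/2) := by
    rw [← Real.exp_add]; congr 1; field_simp; ring
  rw [h32]
  set I := ∫ u : ℝ, Real.exp (-(u ^ 2 - ε) ^ 2 / 8)
  set A := Real.exp (1 / (2 * ε ^ 2))
  set B := Real.exp (-1 / (2 * ε ^ 2) - 1/2)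
  have hπ : Real.pi ≠ 0 := Real.pi_ne_zero
  have hs' : Real.sqrt ε ≠ 0 := hs.ne'
  calc ε * Real.sqrt ε * A * (1 / (2 * Real.pi * ε) * (B * ((Real.sqrt ε)⁻¹ * I)))
      = (A * B) * (I / (2 * Real.pi)) := by field_simp
    _ = Real.exp (-(1:ℝ)/2) / (2 * Real.pi) * I := by rw [hAB]; ring

/-- In the focal case `θ = 1` one has `F₁(ε) = ε^{−3/2} e^{−1/(2ε²)} (c₀ + o(1))`
as `ε ↓ 0` for some constant `c₀ > 0`. -/
theorem stmt_11 :
    ∃ c₀ : ℝ, 0 < c₀ ∧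
      Filter.Tendsto (fun ε : ℝ => ε ^ ((3:ℝ)/2) * Real.exp (1 / (2 * ε ^ 2)) * Fdens1 ε)
        (nhdsWithin 0 (Set.Ioi 0)) (nhds c₀) := by
  set C := Real.exp (-(1:ℝ)/2) / (2 * Real.pi) with hCdef
  have hC : 0 < C := div_pos (Real.exp_pos _) (by positivity)
  set I0 := ∫ u : ℝ, Real.exp (-(u ^ 2 - 0) ^ 2 / 8) with hI0def
  have hI0 : 0 < I0 := by
    rw [hI0def, integral_pos_iff_support_of_nonneg
      (fun u => (Real.exp_pos _).le) aux_integrable0]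
    have : (Function.support fun u : ℝ => Real.exp (-(u ^ 2 - 0) ^ 2 / 8)) = Set.univ := by
      ext u; simp [Function.support, Real.exp_ne_zero]
    rw [this]
    simp
  refine ⟨C * I0, mul_pos hC hI0, ?_⟩
  have hDCT : Filter.Tendsto (fun ε : ℝ => ∫ u : ℝ, Real.exp (-(u ^ 2 - ε) ^ 2 / 8))
      (nhdsWithin 0 (Set.Ioi 0)) (nhds I0) := by
    apply tendsto_integral_filter_of_dominated_convergence
      (fun u : ℝ => Real.exp (17/4) * Real.exp (-u ^ 2))
    · exact Filter.Eventually.of_forall fun ε =>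
        (Real.continuous_exp.comp (by continuity)).aestronglyMeasurable
    · filter_upwards [Ioc_mem_nhdsGT (show (0:ℝ) < 1 by norm_num)] with ε hε
      filter_upwards with u
      rw [Real.norm_eq_abs, abs_of_pos (Real.exp_pos _)]
      exact aux_bound ε u hε.1 hε.2
    · exact aux_integrable
    · filter_upwards with u
      have : Continuous fun ε : ℝ => Real.exp (-(u ^ 2 - ε) ^ 2 / 8) := by continuity
      exact (this.tendsto 0).mono_left nhdsWithin_le_nhds
  refine (hDCT.const_mul C).congr' ?_
  filter_upwards [self_mem_nhdsWithin] with ε hε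
  exact (key_eq ε hε).symm
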